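/- With the attribute setup below, assume the family v is pairwise orthogonal and all vectors v(i,j) have the same norm c. Then for every i ∈ {1,…,l} and j ∈ {1,…,l'}, the squared norms of the centered base-concept representations are ‖u_i‖² = c²·(l−1)/(σ²·l·l') and ‖u'_j‖² = c²·(l'−1)/(σ²·l·l'). -/

import Mathlib

open scoped InnerProductSpace
open Finset

theorem stmt_6
    {d l l' : ℕ} (hd : 1 ≤ d) (hl : 1 ≤ l) (hl' : 1 ≤ l')
    (σ : ℝ) (hσ : 0 < σ)
    (v : Fin l → Fin l' → EuclideanSpace ℝ (Fin d))
    (vhat : Fin l → EuclideanSpace ℝ (Fin d))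
    (vhat' : Fin l' → EuclideanSpace ℝ (Fin d))
    (μ : EuclideanSpace ℝ (Fin d))
    (u : Fin l → EuclideanSpace ℝ (Fin d))
    (u' : Fin l' → EuclideanSpace ℝ (Fin d))
    (hvhat : ∀ i, vhat i = (1 / (l' : ℝ)) • ∑ j, v i j)
    (hvhat' : ∀ j, vhat' j = (1 / (l : ℝ)) • ∑ i, v i j)
    (hμ : μ = (1 / ((l : ℝ) * (l' : ℝ))) • ∑ i, ∑ j, v i j)
    (hu : ∀ i, u i = (1 / σ) • (vhat i - μ))
    (hu' : ∀ j, u' j = (1 / σ) • (vhat' j - μ))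
    (horth : ∀ i j i' j', (i, j) ≠ (i', j') → ⟪v i j, v i' j'⟫_ℝ = 0)
    (c : ℝ) (hc : ∀ i j, ‖v i j‖ = c)
    : (∀ i, ‖u i‖ ^ 2 = c ^ 2 * ((l : ℝ) - 1) / (σ ^ 2 * (l : ℝ) * (l' : ℝ))) ∧
      (∀ j, ‖u' j‖ ^ 2 = c ^ 2 * ((l' : ℝ) - 1) / (σ ^ 2 * (l : ℝ) * (l' : ℝ))) := by
  have hl0 : (l : ℝ) ≠ 0 := Nat.cast_ne_zero.mpr (by omega)
  have hl'0 : (l' : ℝ) ≠ 0 := Nat.cast_ne_zero.mpr (by omega)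
  have hσ0 : σ ≠ 0 := ne_of_gt hσ
  have hself : ∀ i j, ⟪v i j, v i j⟫_ℝ = c ^ 2 := by
    intro i j; rw [real_inner_self_eq_norm_sq, hc]
  have key : ∀ (s t : Finset (Fin l × Fin l')),
      ⟪∑ p ∈ s, v p.1 p.2, ∑ q ∈ t, v q.1 q.2⟫_ℝ = ((s ∩ t).card : ℝ) * c ^ 2 := by
    intro s t
    rw [sum_inner]
    have h1 : ∀ p ∈ s, ⟪v p.1 p.2, ∑ q ∈ t, v q.1 q.2⟫_ℝ
        = if p ∈ t then c ^ 2 else 0 := by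
      intro p hp
      rw [inner_sum]
      by_cases hpt : p ∈ t
      · rw [Finset.sum_eq_single p]
        · simp [hpt, hself, hc]
        · intro q hq hqp
          apply horth
          simp [Prod.ext_iff] at hqp ⊢
          tauto
        · intro h; exact absurd hpt h
      · rw [Finset.sum_eq_zero, if_neg hpt]
        intro q hq
        apply horth
        intro hcon
        apply hpt
        have : p = q := by
          cases p; cases q; simpa [Prod.ext_iff] using hcon
        rwa [this]
    rw [Finset.sum_congr rfl h1, Finset.sum_ite_mem, Finset.sum_const,
      nsmul_eq_mul]
  have hSi : ∀ i : Fin l, (∑ j, v i j) = ∑ p ∈ ({i} ×ˢ (univ : Finset (Fin l'))), v p.1 p.2 := by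
    intro i; rw [Finset.sum_product]; simp
  have hSj : ∀ j : Fin l', (∑ i, v i j) = ∑ p ∈ ((univ : Finset (Fin l)) ×ˢ {j}), v p.1 p.2 := by
    intro j; rw [Finset.sum_product]; simp
  have hT : (∑ i, ∑ j, v i j) = ∑ p ∈ (univ : Finset (Fin l × Fin l')), v p.1 p.2 := by
    rw [← Finset.univ_product_univ, Finset.sum_product]
  constructor
  · intro i
    have h1 : ‖u i‖ ^ 2 = ⟪u i, u i⟫_ℝ := (real_inner_self_eq_norm_sq _).symm
    rw [h1, hu, hvhat, hμ, hSi, hT]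
    simp only [inner_sub_left, inner_sub_right, real_inner_smul_left,
      real_inner_smul_right, key, smul_sub, inner_smul_left, inner_smul_right]
    have c1 : (({i} ×ˢ (univ : Finset (Fin l')) ∩ {i} ×ˢ univ).card : ℝ) = l' := by simp
    have c2 : (({i} ×ˢ (univ : Finset (Fin l')) ∩ univ).card : ℝ) = l' := by simp
    have c3 : (((univ : Finset (Fin l × Fin l')) ∩ {i} ×ˢ univ).card : ℝ) = l' := by simp
    have c4 : (((univ : Finset (Fin l × Fin l')) ∩ univ).card : ℝ) = l * l' := by simp
    rw [c1, c2, c3, c4]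
    simp only [conj_trivial]
    field_simp
    ring
  · intro j
    have h1 : ‖u' j‖ ^ 2 = ⟪u' j, u' j⟫_ℝ := (real_inner_self_eq_norm_sq _).symm
    rw [h1, hu', hvhat', hμ, hSj, hT]
    simp only [inner_sub_left, inner_sub_right, real_inner_smul_left,
      real_inner_smul_right, key, smul_sub, inner_smul_left, inner_smul_right]
    have c1 : (((univ : Finset (Fin l)) ×ˢ {j} ∩ univ ×ˢ {j}).card : ℝ) = l := by simp
    have c2 : (((univ : Finset (Fin l)) ×ˢ {j} ∩ univ).card : ℝ) = l := by simp
    have c3 : (((univ : Finset (Fin l × Fin l')) ∩ univ ×ˢ {j}).card : ℝ) = l := by simp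
    have c4 : (((univ : Finset (Fin l × Fin l')) ∩ univ).card : ℝ) = l * l' := by simp
    rw [c1, c2, c3, c4]
    simp only [conj_trivial]
    field_simp
    ring
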